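/- arXiv:1710.09417 — 5 statements merged into one kernel-verified Lean document; each statement's English description precedes it below -/
import Mathlib

section
/- If f is a valid assignment, then the set S_f = {(a, f(a)) : a ∈ A} is a stable (independent) set of the associated graph G, and its weight satisfies z(S_f) = M·n_A − w(f). -/
/-- The associated graph of a `K`-Matching instance: vertices are pairs `(a, j)` with
`j ∈ P a`; distinct vertices `(a,j)`, `(a',j')` are adjacent iff `a = a'` or
(`a ≠ a'` and) `j ∩ j' ≠ ∅`. -/
def kmGraph {A B : Type*} [DecidableEq B] (P : A → Finset (Finset B)) :
    SimpleGraph {v : A × Finset B // v.2 ∈ P v.1} where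
  Adj v w := v ≠ w ∧ (v.1.1 = w.1.1 ∨ (v.1.2 ∩ w.1.2).Nonempty)
  symm := ⟨by
    rintro v w ⟨h1, h2⟩
    refine ⟨h1.symm, ?_⟩
    rcases h2 with h | h
    · exact Or.inl h.symm
    · exact Or.inr (by rwa [Finset.inter_comm])⟩
  loopless := ⟨fun v h => h.1 rfl⟩

/-- for a valid assignment `f`, the set `S_f = {(a, f a) : a ∈ A}` is a
stable set of the associated graph and `z(S_f) = M·n_A − w(f)`. -/
theorem stmt_1 {A B : Type*} [Fintype A] [DecidableEq A] [DecidableEq B]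
    (K : ℕ) (P : A → Finset (Finset B))
    (hPK : ∀ a, ∀ j ∈ P a, j.card ≤ K)
    (w : A → Finset B → ℝ) (hw : ∀ a, ∀ j ∈ P a, 0 ≤ w a j)
    (f : A → Finset B)
    (hfP : ∀ a, f a ∈ P a)
    (hfd : ∀ a₁ a₂ : A, a₁ ≠ a₂ → f a₁ ∩ f a₂ = ∅)
    (M : ℝ) (hM : M = ∑ a, ∑ j ∈ P a, w a j)
    (S : Finset {v : A × Finset B // v.2 ∈ P v.1})
    (hS : S = Finset.univ.image
      (fun a => (⟨(a, f a), hfP a⟩ : {v : A × Finset B // v.2 ∈ P v.1}))) :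
    (∀ u ∈ S, ∀ v ∈ S, ¬ (kmGraph P).Adj u v) ∧
      ∑ v ∈ S, (M - w v.1.1 v.1.2) = M * (Fintype.card A : ℝ) - ∑ a, w a (f a) := by
  subst hS
  have hinj : Function.Injective
      (fun a => (⟨(a, f a), hfP a⟩ : {v : A × Finset B // v.2 ∈ P v.1})) := by
    intro a b h
    exact congrArg (fun v => v.1.1) h
  constructor
  · rintro u hu v hv ⟨hne, hadj⟩
    simp only [Finset.mem_image, Finset.mem_univ, true_and] at hu hv
    obtain ⟨a, rfl⟩ := hu
    obtain ⟨b, rfl⟩ := hv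
    have hab : a ≠ b := fun h => hne (by subst h; rfl)
    rcases hadj with h | h
    · exact hab h
    · rw [hfd a b hab] at h
      exact Finset.not_nonempty_empty h
  · rw [Finset.sum_image (fun a _ b _ h => hinj h), Finset.sum_sub_distrib,
      Finset.sum_const, Finset.card_univ, nsmul_eq_mul, mul_comm]
end

section
/- Let M₁ ⊆ 𝒜₁ and M₂ ⊆ 𝒜₂ be perfect matchings with M₁ ∩ M₂ = ∅. Define f on A by f((r,s)) = {p^i_r, q^i_s} if (p_r, q_s) ∈ M_i (i ∈ {1,2}), and f((r,s)) = {z_{rs}, z'_{rs}} if (p_r, q_s) ∉ M₁ ∪ M₂. Then f is a valid assignment of the constructed 2-matching instance (f((r,s)) ∈ P_{(r,s)} for all (r,s) ∈ A and distinct elements of A receive disjoint sets), and its weight satisfies w(f) = |𝒜₁ \ M₁| + |𝒜₂ \ M₂| = |𝒜₁| + |𝒜₂| − 2n = t. -/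
/-- The ground set `B` of the constructed 2-matching instance: elements `p^i_r`
(left summand), `q^i_s` (middle summand), and `z_{rs}, z'_{rs}` (right summand,
indexed by a pair and a tag in `Fin 2`). -/
abbrev DMB (n : ℕ) := (Fin 2 × Fin n) ⊕ ((Fin 2 × Fin n) ⊕ ((Fin n × Fin n) × Fin 2))

/-- The candidate set `{p^i_r, q^i_s}` for the pair `a = (r, s)`. -/
def pqSet {n : ℕ} (i : Fin 2) (a : Fin n × Fin n) : Finset (DMB n) :=
  {Sum.inl (i, a.1), Sum.inr (Sum.inl (i, a.2))}

/-- The candidate set `{z_{rs}, z'_{rs}}` for the pair `a = (r, s)`. -/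
def zSet {n : ℕ} (a : Fin n × Fin n) : Finset (DMB n) :=
  {Sum.inr (Sum.inr (a, 0)), Sum.inr (Sum.inr (a, 1))}

/-- The candidate sets `P_{(r,s)}` of the constructed 2-matching instance. -/
def Pdm {n : ℕ} (A1 A2 : Finset (Fin n × Fin n)) (a : Fin n × Fin n) :
    Finset (Finset (DMB n)) :=
  (if a ∈ A1 then {pqSet 0 a} else ∅) ∪ (if a ∈ A2 then {pqSet 1 a} else ∅) ∪ {zSet a}

/-- The weights of the constructed 2-matching instance: `0` on `{p^i_r, q^i_s}` and `1`
on `{z_{rs}, z'_{rs}}` when `(p_r,q_s) ∈ 𝒜₁ △ 𝒜₂`; `1` and `2` respectively when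
`(p_r,q_s) ∈ 𝒜₁ ∩ 𝒜₂`. -/
def wdm {n : ℕ} (A1 A2 : Finset (Fin n × Fin n)) (a : Fin n × Fin n)
    (j : Finset (DMB n)) : ℝ :=
  (if j = zSet a then 1 else 0) + (if a ∈ A1 ∧ a ∈ A2 then 1 else 0)

/-- A perfect matching: `n` pairs such that every `p_r` and every `q_s` occurs in
exactly one pair. -/
def IsPM {n : ℕ} (M : Finset (Fin n × Fin n)) : Prop :=
  M.card = n ∧ (∀ r : Fin n, ∃! s : Fin n, (r, s) ∈ M) ∧
    (∀ s : Fin n, ∃! r : Fin n, (r, s) ∈ M)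

lemma pq_ne_z {n : ℕ} (i : Fin 2) (a b : Fin n × Fin n) : pqSet i a ≠ zSet b := by
  intro h
  have : (Sum.inl (i, a.1) : DMB n) ∈ zSet b := h ▸ by simp [pqSet]
  simp [zSet] at this

lemma pq_inter_z {n : ℕ} (i : Fin 2) (a b : Fin n × Fin n) : pqSet i a ∩ zSet b = ∅ := by
  ext x
  simp only [Finset.mem_inter, pqSet, zSet, Finset.mem_insert, Finset.mem_singleton,
    Finset.notMem_empty, iff_false, not_and]
  rintro (rfl | rfl) <;> simp

lemma z_inter_z {n : ℕ} {a b : Fin n × Fin n} (h : a ≠ b) : zSet a ∩ zSet b = ∅ := by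
  ext x
  simp only [Finset.mem_inter, zSet, Finset.mem_insert, Finset.mem_singleton,
    Finset.notMem_empty, iff_false, not_and]
  rintro (rfl | rfl) <;> simp [Prod.ext_iff, h]

lemma pq_inter_pq {n : ℕ} {i j : Fin 2} {a b : Fin n × Fin n}
    (h : i ≠ j ∨ (a.1 ≠ b.1 ∧ a.2 ≠ b.2)) : pqSet i a ∩ pqSet j b = ∅ := by
  ext x
  simp only [Finset.mem_inter, pqSet, Finset.mem_insert, Finset.mem_singleton,
    Finset.notMem_empty, iff_false, not_and]
  rcases h with h | ⟨h1, h2⟩ <;>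
    rintro (rfl | rfl) <;> simp [Prod.ext_iff] <;> tauto

lemma pm_fst_inj {n : ℕ} {M : Finset (Fin n × Fin n)} (hpm : IsPM M)
    {a b : Fin n × Fin n} (ha : a ∈ M) (hb : b ∈ M) (h : a.1 = b.1) : a = b := by
  obtain ⟨-, h1, -⟩ := hpm
  obtain ⟨s, -, hs⟩ := h1 a.1
  have e1 : a.2 = s := hs a.2 (by simpa using ha)
  have e2 : b.2 = s := hs b.2 (by show (a.1, b.2) ∈ M; rw [h]; simpa using hb)
  exact Prod.ext h (e1.trans e2.symm)

lemma pm_snd_inj {n : ℕ} {M : Finset (Fin n × Fin n)} (hpm : IsPM M)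
    {a b : Fin n × Fin n} (ha : a ∈ M) (hb : b ∈ M) (h : a.2 = b.2) : a = b := by
  obtain ⟨-, -, h2⟩ := hpm
  obtain ⟨r, -, hr⟩ := h2 a.2
  have e1 : a.1 = r := hr a.1 (by simpa using ha)
  have e2 : b.1 = r := hr b.1 (by show (b.1, a.2) ∈ M; rw [h]; simpa using hb)
  exact Prod.ext (e1.trans e2.symm) (h)

set_option maxHeartbeats 1000000 in
/-- from disjoint perfect matchings `M₁ ⊆ 𝒜₁`, `M₂ ⊆ 𝒜₂`, the assignment
`f(r,s) = {p^i_r, q^i_s}` if `(p_r,q_s) ∈ M_i` and `f(r,s) = {z_{rs}, z'_{rs}}`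
otherwise is a valid assignment of weight `|𝒜₁ \ M₁| + |𝒜₂ \ M₂| = |𝒜₁| + |𝒜₂| − 2n = t`. -/
theorem stmt_7 {n : ℕ} (hn : 0 < n)
    (A1 A2 M1 M2 : Finset (Fin n × Fin n))
    (hM1 : M1 ⊆ A1) (hM2 : M2 ⊆ A2)
    (hpm1 : IsPM M1) (hpm2 : IsPM M2) (hdisj : M1 ∩ M2 = ∅)
    (f : Fin n × Fin n → Finset (DMB n))
    (hf : ∀ a, f a = if a ∈ M1 then pqSet 0 a else if a ∈ M2 then pqSet 1 a else zSet a) :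
    (∀ a ∈ A1 ∪ A2, f a ∈ Pdm A1 A2 a) ∧
    (∀ a₁ ∈ A1 ∪ A2, ∀ a₂ ∈ A1 ∪ A2, a₁ ≠ a₂ → f a₁ ∩ f a₂ = ∅) ∧
    ∑ a ∈ A1 ∪ A2, wdm A1 A2 a (f a) = ((A1 \ M1).card : ℝ) + ((A2 \ M2).card : ℝ) ∧
    ((A1 \ M1).card : ℝ) + ((A2 \ M2).card : ℝ) = (A1.card : ℝ) + (A2.card : ℝ) - 2 * n := by
  classical
  have hMA : M1 ∪ M2 ⊆ A1 ∪ A2 := Finset.union_subset_union hM1 hM2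
  have hz : ∀ a, (f a = zSet a) ↔ (a ∉ M1 ∧ a ∉ M2) := by
    intro a
    rw [hf a]
    by_cases h1 : a ∈ M1
    · simp [h1, pq_ne_z]
    · by_cases h2 : a ∈ M2 <;> simp [h1, h2, pq_ne_z]
  have e1 : ((A1 \ M1).card : ℝ) = (A1.card : ℝ) - n := by
    rw [Finset.card_sdiff_of_subset hM1, Nat.cast_sub (Finset.card_le_card hM1), hpm1.1]
  have e2 : ((A2 \ M2).card : ℝ) = (A2.card : ℝ) - n := by
    rw [Finset.card_sdiff_of_subset hM2, Nat.cast_sub (Finset.card_le_card hM2), hpm2.1]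
  have hMcard : (M1 ∪ M2).card = 2 * n := by
    rw [Finset.card_union_of_disjoint (Finset.disjoint_iff_inter_eq_empty.mpr hdisj),
      hpm1.1, hpm2.1]
    ring
  have e3 : (((A1 ∪ A2) \ (M1 ∪ M2)).card : ℝ) = ((A1 ∪ A2).card : ℝ) - 2 * n := by
    rw [Finset.card_sdiff_of_subset hMA, Nat.cast_sub (hMcard ▸ Finset.card_le_card hMA), hMcard]
    push_cast
    ring
  have e4 : ((A1 ∪ A2).card : ℝ) + ((A1 ∩ A2).card : ℝ) = (A1.card : ℝ) + A2.card := by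
    exact_mod_cast congrArg (Nat.cast : ℕ → ℝ) (Finset.card_union_add_card_inter A1 A2)
  refine ⟨?_, ?_, ?_, ?_⟩
  · intro a ha
    rw [hf a]
    by_cases h1 : a ∈ M1
    · simp [h1, Pdm, hM1 h1]
    · by_cases h2 : a ∈ M2
      · simp [h1, h2, Pdm, hM2 h2]
      · simp [h1, h2, Pdm]
  · intro a1 _ a2 _ hne
    rw [hf a1, hf a2]
    split_ifs <;>
      first
        | exact pq_inter_z _ _ _
        | (rw [Finset.inter_comm]; exact pq_inter_z _ _ _)
        | exact z_inter_z hne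
        | exact pq_inter_pq (Or.inl (by decide))
        | exact pq_inter_pq (Or.inr ⟨fun h => hne (pm_fst_inj hpm1 ‹_› ‹_› h),
            fun h => hne (pm_snd_inj hpm1 ‹_› ‹_› h)⟩)
        | exact pq_inter_pq (Or.inr ⟨fun h => hne (pm_fst_inj hpm2 ‹_› ‹_› h),
            fun h => hne (pm_snd_inj hpm2 ‹_› ‹_› h)⟩)
  · have hsum : ∑ a ∈ A1 ∪ A2, wdm A1 A2 a (f a)
        = (((A1 ∪ A2) \ (M1 ∪ M2)).card : ℝ) + ((A1 ∩ A2).card : ℝ) := by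
      unfold wdm
      rw [Finset.sum_add_distrib]
      congr 1
      · rw [Finset.sum_boole]
        congr 2
        ext a
        simp [Finset.mem_filter, Finset.mem_sdiff, hz a, not_or]
      · rw [Finset.sum_boole]
        congr 2
        ext a
        simp only [Finset.mem_filter, Finset.mem_inter, Finset.mem_union]
        tauto
    rw [hsum, e1, e2, e3]
    linarith [e4]
  · rw [e1, e2]
    ring
end

section
/- Let f be a valid assignment of the constructed 2-matching instance with w(f) ≤ t. For i ∈ {1,2}, define M_i = {(p_r, q_s) : (r,s) ∈ A and f((r,s)) = {p^i_r, q^i_s}}. Then M₁ ⊆ 𝒜₁ and M₂ ⊆ 𝒜₂ are perfect matchings with M₁ ∩ M₂ = ∅ and |M₁| = |M₂| = n. -/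
lemma pq_ne {n : ℕ} (a b : Fin n × Fin n) : pqSet 0 a ≠ pqSet 1 b := by
  intro h
  have : (Sum.inl ((0:Fin 2), a.1) : DMB n) ∈ pqSet 1 b := h ▸ (by simp [pqSet])
  simp [pqSet, Prod.ext_iff] at this

lemma mem_Pdm {n : ℕ} {A1 A2 : Finset (Fin n × Fin n)} {a : Fin n × Fin n}
    {j : Finset (DMB n)} (h : j ∈ Pdm A1 A2 a) :
    (a ∈ A1 ∧ j = pqSet 0 a) ∨ (a ∈ A2 ∧ j = pqSet 1 a) ∨ j = zSet a := by
  unfold Pdm at h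
  split_ifs at h <;> simp_all [Finset.mem_union]

/-- from a valid assignment `f` of the constructed 2-matching instance
with `w(f) ≤ t = |𝒜₁| + |𝒜₂| − 2n`, the sets
`M_i = {(p_r,q_s) : (r,s) ∈ A, f(r,s) = {p^i_r, q^i_s}}` are disjoint perfect
matchings with `M₁ ⊆ 𝒜₁`, `M₂ ⊆ 𝒜₂` and `|M₁| = |M₂| = n`. -/
theorem stmt_8 {n : ℕ} (hn : 0 < n)
    (A1 A2 : Finset (Fin n × Fin n))
    (f : Fin n × Fin n → Finset (DMB n))
    (hfP : ∀ a ∈ A1 ∪ A2, f a ∈ Pdm A1 A2 a)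
    (hfd : ∀ a₁ ∈ A1 ∪ A2, ∀ a₂ ∈ A1 ∪ A2, a₁ ≠ a₂ → f a₁ ∩ f a₂ = ∅)
    (hwf : ∑ a ∈ A1 ∪ A2, wdm A1 A2 a (f a) ≤ (A1.card : ℝ) + (A2.card : ℝ) - 2 * n)
    (M1 M2 : Finset (Fin n × Fin n))
    (hM1 : M1 = (A1 ∪ A2).filter (fun a => f a = pqSet 0 a))
    (hM2 : M2 = (A1 ∪ A2).filter (fun a => f a = pqSet 1 a)) :
    M1 ⊆ A1 ∧ M2 ⊆ A2 ∧ IsPM M1 ∧ IsPM M2 ∧ M1 ∩ M2 = ∅ ∧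
      M1.card = n ∧ M2.card = n := by
  subst hM1 hM2
  set U := A1 ∪ A2 with hU
  have key : ∀ (i : Fin 2), ∀ a₁ ∈ U, ∀ a₂ ∈ U,
      f a₁ = pqSet i a₁ → f a₂ = pqSet i a₂ → (a₁.1 = a₂.1 ∨ a₁.2 = a₂.2) → a₁ = a₂ := by
    intro i a₁ h₁ a₂ h₂ hf1 hf2 hco
    by_contra hne
    have hd := hfd a₁ h₁ a₂ h₂ hne
    rw [Finset.eq_empty_iff_forall_notMem] at hd
    rcases hco with hco | hco
    · exact hd (Sum.inl (i, a₁.1)) (by simp [Finset.mem_inter, hf1, hf2, pqSet, hco])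
    · exact hd (Sum.inr (Sum.inl (i, a₁.2))) (by simp [Finset.mem_inter, hf1, hf2, pqSet, hco])
  have injOn : ∀ i : Fin 2,
      Set.InjOn Prod.fst (U.filter (fun a => f a = pqSet i a) : Set (Fin n × Fin n)) := by
    intro i a₁ h₁ a₂ h₂ he
    simp only [Finset.coe_filter, Set.mem_setOf_eq] at h₁ h₂
    exact key i a₁ h₁.1 a₂ h₂.1 h₁.2 h₂.2 (Or.inl he)
  have injOn2 : ∀ i : Fin 2,
      Set.InjOn Prod.snd (U.filter (fun a => f a = pqSet i a) : Set (Fin n × Fin n)) := by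
    intro i a₁ h₁ a₂ h₂ he
    simp only [Finset.coe_filter, Set.mem_setOf_eq] at h₁ h₂
    exact key i a₁ h₁.1 a₂ h₂.1 h₁.2 h₂.2 (Or.inr he)
  have cardle : ∀ i : Fin 2, (U.filter (fun a => f a = pqSet i a)).card ≤ n := by
    intro i
    have := Finset.card_le_card_of_injOn Prod.fst
      (fun a _ => Finset.mem_univ a.1) (injOn i)
    simpa using this
  have hsum : ∑ a ∈ U, wdm A1 A2 a (f a)
      = ((U.filter (fun a => f a = zSet a)).card : ℝ) + ((A1 ∩ A2).card : ℝ) := by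
    unfold wdm
    rw [Finset.sum_add_distrib, Finset.sum_boole, Finset.sum_boole]
    have hfe : U.filter (fun a => a ∈ A1 ∧ a ∈ A2) = A1 ∩ A2 := by
      ext a
      simp only [Finset.mem_filter, Finset.mem_inter, Finset.mem_union, hU]
      tauto
    rw [hfe]
  have hcover : ∀ a ∈ U, (1:ℝ) ≤ (if f a = pqSet 0 a then (1:ℝ) else 0)
      + (if f a = pqSet 1 a then 1 else 0) + (if f a = zSet a then 1 else 0) := by
    intro a ha
    rcases mem_Pdm (hfP a ha) with ⟨_, h⟩ | ⟨_, h⟩ | h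
    · simp [h, pq_ne a a, pq_ne_z 0 a a]
    · simp [h, (pq_ne a a).symm, pq_ne_z 1 a a]
    · simp [h, (pq_ne_z 0 a a).symm, (pq_ne_z 1 a a).symm]
  have hcount : (U.card : ℝ) ≤ ((U.filter (fun a => f a = pqSet 0 a)).card : ℝ)
      + ((U.filter (fun a => f a = pqSet 1 a)).card : ℝ)
      + ((U.filter (fun a => f a = zSet a)).card : ℝ) := by
    calc (U.card : ℝ) = ∑ _a ∈ U, (1:ℝ) := by simp
      _ ≤ _ := Finset.sum_le_sum hcover
      _ = _ := by
        rw [Finset.sum_add_distrib, Finset.sum_add_distrib,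
          Finset.sum_boole, Finset.sum_boole, Finset.sum_boole]
  have hUcard : U.card + (A1 ∩ A2).card = A1.card + A2.card :=
    Finset.card_union_add_card_inter A1 A2
  have h2n : 2 * n ≤ (U.filter (fun a => f a = pqSet 0 a)).card
      + (U.filter (fun a => f a = pqSet 1 a)).card := by
    have hUc : (U.card : ℝ) + ((A1 ∩ A2).card : ℝ) = (A1.card : ℝ) + (A2.card : ℝ) := by
      exact_mod_cast congrArg (Nat.cast : ℕ → ℝ) hUcard
    rw [hsum] at hwf
    have : (2 * n : ℝ) ≤ ((U.filter (fun a => f a = pqSet 0 a)).card : ℝ)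
        + ((U.filter (fun a => f a = pqSet 1 a)).card : ℝ) := by linarith
    exact_mod_cast this
  have hc0 : (U.filter (fun a => f a = pqSet 0 a)).card = n := by
    have := cardle 0; have := cardle 1; omega
  have hc1 : (U.filter (fun a => f a = pqSet 1 a)).card = n := by
    have := cardle 0; have := cardle 1; omega
  have hsub1 : ∀ a ∈ U.filter (fun a => f a = pqSet 0 a), a ∈ A1 := by
    intro a ha
    rw [Finset.mem_filter] at ha
    rcases mem_Pdm (hfP a ha.1) with ⟨h, _⟩ | ⟨_, h⟩ | h
    · exact h
    · exact absurd (ha.2.symm.trans h) (pq_ne a a)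
    · exact absurd (ha.2.symm.trans h) (pq_ne_z 0 a a)
  have hsub2 : ∀ a ∈ U.filter (fun a => f a = pqSet 1 a), a ∈ A2 := by
    intro a ha
    rw [Finset.mem_filter] at ha
    rcases mem_Pdm (hfP a ha.1) with ⟨_, h⟩ | ⟨h, _⟩ | h
    · exact absurd (h.symm.trans ha.2) (pq_ne a a)
    · exact h
    · exact absurd (ha.2.symm.trans h) (pq_ne_z 1 a a)
  have mkPM : ∀ i : Fin 2, (U.filter (fun a => f a = pqSet i a)).card = n →
      IsPM (U.filter (fun a => f a = pqSet i a)) := by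
    intro i hc
    have himg1 : (U.filter (fun a => f a = pqSet i a)).image Prod.fst = Finset.univ := by
      apply Finset.eq_univ_of_card
      rw [Fintype.card_fin, Finset.card_image_of_injOn (injOn i), hc]
    have himg2 : (U.filter (fun a => f a = pqSet i a)).image Prod.snd = Finset.univ := by
      apply Finset.eq_univ_of_card
      rw [Fintype.card_fin, Finset.card_image_of_injOn (injOn2 i), hc]
    refine ⟨hc, ?_, ?_⟩
    · intro r
      have hr : r ∈ (U.filter (fun a => f a = pqSet i a)).image Prod.fst := by
        rw [himg1]; exact Finset.mem_univ r
      obtain ⟨a, ha, hfst⟩ := Finset.mem_image.mp hr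
      obtain ⟨a1, a2⟩ := a
      subst hfst
      refine ⟨a2, ha, ?_⟩
      intro s hs
      have h1 := Finset.mem_filter.mp hs
      have h2 := Finset.mem_filter.mp ha
      have heq := key i (a1, s) h1.1 (a1, a2) h2.1 h1.2 h2.2 (Or.inl rfl)
      exact congrArg Prod.snd heq
    · intro s
      have hs : s ∈ (U.filter (fun a => f a = pqSet i a)).image Prod.snd := by
        rw [himg2]; exact Finset.mem_univ s
      obtain ⟨a, ha, hsnd⟩ := Finset.mem_image.mp hs
      obtain ⟨a1, a2⟩ := a
      subst hsnd
      refine ⟨a1, ha, ?_⟩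
      intro r hr
      have h1 := Finset.mem_filter.mp hr
      have h2 := Finset.mem_filter.mp ha
      have heq := key i (r, a2) h1.1 (a1, a2) h2.1 h1.2 h2.2 (Or.inr rfl)
      exact congrArg Prod.fst heq
  have hint : U.filter (fun a => f a = pqSet 0 a) ∩ U.filter (fun a => f a = pqSet 1 a) = ∅ := by
    rw [Finset.eq_empty_iff_forall_notMem]
    intro a ha
    rw [Finset.mem_inter, Finset.mem_filter, Finset.mem_filter] at ha
    exact pq_ne a a (ha.1.2.symm.trans ha.2.2)
  exact ⟨hsub1, hsub2, mkPM 0 hc0, mkPM 1 hc1, hint, hc0, hc1⟩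
end

section
/- In the K-MDP instance constructed from a 2-MDPAW instance, the normalization condition Σ_{j∈P'_a} e^{−w'_{a,j}} = 1 holds for every a ∈ A', every candidate set in P'_a has cardinality exactly K, and all weights w'_{a,j} are nonnegative. -/
/-- The ground set `B'` of the constructed K-MDP instance: the original `B`, the new
elements `b̃_{j,k}` (indexed by a subset `j` of `B` and `k`), and the new elements
`b̄_{a,k}` (indexed by `a ∈ A` and `k`). -/
abbrev BExt (A B : Type*) := B ⊕ ((Finset B × ℕ) ⊕ (A × ℕ))

/-- The candidate set `j ∪ {b̃_{j,3}, …, b̃_{j,K}}` obtained from `j ∈ P a`. -/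
def extSet {A B : Type*} [DecidableEq A] [DecidableEq B] (K : ℕ) (j : Finset B) :
    Finset (BExt A B) :=
  j.image Sum.inl ∪ (Finset.Icc 3 K).image (fun k => Sum.inr (Sum.inl (j, k)))

/-- The candidate set `j'_a = {b̄_{a,1}, …, b̄_{a,K}}`. -/
def barSet {A B : Type*} [DecidableEq A] [DecidableEq B] (K : ℕ) (a : A) :
    Finset (BExt A B) :=
  (Finset.Icc 1 K).image (fun k => Sum.inr (Sum.inr (a, k)))

/-- The candidate sets of the constructed K-MDP instance: the ground set `A'` is
`A ⊕ A` (`Sum.inl a` is the original `a`, `Sum.inr aᵢ` is `āᵢ`), with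
`P'_{a} = {j ∪ {b̃_{j,3},…,b̃_{j,K}} : j ∈ P a} ∪ {j'_a}` and `P'_{ā} = {j'_a}`. -/
def Pext {A B : Type*} [DecidableEq A] [DecidableEq B] (K : ℕ)
    (P : A → Finset (Finset B)) : A ⊕ A → Finset (Finset (BExt A B))
  | Sum.inl a => (P a).image (extSet K) ∪ {barSet K a}
  | Sum.inr a => {barSet K a}


section aux
variable {A B : Type*} [DecidableEq A] [DecidableEq B]

lemma mem_extSet_inl (K : ℕ) (j : Finset B) (b : B) :
    (Sum.inl b : BExt A B) ∈ extSet K j ↔ b ∈ j := by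
  simp [extSet]

lemma extSet_injective (K : ℕ) : Function.Injective (extSet (A := A) (B := B) K) := by
  intro j1 j2 h
  ext b
  rw [← mem_extSet_inl (A := A) K, h, mem_extSet_inl]

lemma extSet_card (K : ℕ) (hK : 2 ≤ K) (j : Finset B) (hj : j.card = 2) :
    (extSet (A := A) K j).card = K := by
  rw [extSet, Finset.card_union_of_disjoint, Finset.card_image_of_injective _ Sum.inl_injective,
    Finset.card_image_of_injective, hj, Nat.card_Icc]
  · omega
  · intro k1 k2 h; simpa using h
  · simp [Finset.disjoint_left]

lemma barSet_card (K : ℕ) (a : A) : (barSet (B := B) K a).card = K := by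
  rw [barSet, Finset.card_image_of_injective, Nat.card_Icc]
  · omega
  · intro k1 k2 h; simpa using h

lemma barSet_ne_extSet (K : ℕ) (a : A) (j : Finset B) (hj : j.Nonempty) :
    barSet K a ≠ extSet K j := by
  intro h
  obtain ⟨b, hb⟩ := hj
  have : (Sum.inl b : BExt A B) ∈ barSet K a := by
    rw [h, mem_extSet_inl]; exact hb
  simp [barSet] at this

end aux

/-- in the K-MDP instance constructed from a 2-MDPAW instance, the
weights are normalized (`∑_{J ∈ P'_x} e^{−w'_{x,J}} = 1` for every `x ∈ A'`), every
candidate set has cardinality exactly `K`, and all weights are nonnegative. -/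
theorem stmt_10 {A B : Type*} [DecidableEq A] [DecidableEq B]
    (K : ℕ) (hK : 2 ≤ K)
    (P : A → Finset (Finset B))
    (hPne : ∀ a, (P a).Nonempty)
    (hP2 : ∀ a, ∀ j ∈ P a, j.card = 2)
    (w : A → Finset B → ℝ) (hw : ∀ a, ∀ j ∈ P a, 0 ≤ w a j)
    (β : ℝ) (hβ0 : 0 ≤ β)
    (hβ : ∀ a, Real.log (∑ j ∈ P a, Real.exp (-(w a j))) < β)
    (w' : A ⊕ A → Finset (BExt A B) → ℝ)
    (hw'1 : ∀ a : A, ∀ j ∈ P a, w' (Sum.inl a) (extSet K j) = w a j + β)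
    (hw'2 : ∀ a : A, w' (Sum.inl a) (barSet K a) =
      -Real.log (1 - ∑ j ∈ P a, Real.exp (-(w a j + β))))
    (hw'3 : ∀ a : A, w' (Sum.inr a) (barSet K a) = 0) :
    (∀ x : A ⊕ A, ∑ J ∈ Pext K P x, Real.exp (-(w' x J)) = 1) ∧
    (∀ x : A ⊕ A, ∀ J ∈ Pext K P x, J.card = K) ∧
    (∀ x : A ⊕ A, ∀ J ∈ Pext K P x, 0 ≤ w' x J) := by
  -- basic facts about S_a
  have hSpos : ∀ a : A, 0 < ∑ j ∈ P a, Real.exp (-(w a j + β)) := by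
    intro a
    exact Finset.sum_pos (fun j _ => Real.exp_pos _) (hPne a)
  have hSlt1 : ∀ a : A, (∑ j ∈ P a, Real.exp (-(w a j + β))) < 1 := by
    intro a
    have hpos : 0 < ∑ j ∈ P a, Real.exp (-(w a j)) :=
      Finset.sum_pos (fun j _ => Real.exp_pos _) (hPne a)
    have h1 : (∑ j ∈ P a, Real.exp (-(w a j))) < Real.exp β :=
      (Real.log_lt_iff_lt_exp hpos).mp (hβ a)
    have h2 : (∑ j ∈ P a, Real.exp (-(w a j + β)))
        = (∑ j ∈ P a, Real.exp (-(w a j))) * Real.exp (-β) := by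
      rw [Finset.sum_mul]
      refine Finset.sum_congr rfl fun j _ => ?_
      rw [← Real.exp_add]; ring_nf
    rw [h2]
    calc (∑ j ∈ P a, Real.exp (-(w a j))) * Real.exp (-β)
        < Real.exp β * Real.exp (-β) :=
          mul_lt_mul_of_pos_right h1 (Real.exp_pos _)
      _ = 1 := by rw [← Real.exp_add]; simp
  have hbarnotmem : ∀ a : A, barSet K a ∉ (P a).image (extSet K) := by
    intro a h
    obtain ⟨j, hj, hje⟩ := Finset.mem_image.mp h
    exact barSet_ne_extSet K a j (Finset.card_pos.mp (by rw [hP2 a j hj]; norm_num)) hje.symm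
  refine ⟨?_, ?_, ?_⟩
  · rintro (a | a)
    · have hdisj : Disjoint ((P a).image (extSet K)) ({barSet K a} : Finset (Finset (BExt A B))) := by
        simp [Finset.disjoint_left]
        intro j hj hje
        exact barSet_ne_extSet K a j (Finset.card_pos.mp (by rw [hP2 a j hj]; norm_num)) hje.symm
      show ∑ J ∈ (P a).image (extSet K) ∪ {barSet K a}, Real.exp (-(w' (Sum.inl a) J)) = 1
      rw [Finset.sum_union hdisj, Finset.sum_singleton,
        Finset.sum_image (fun j _ l _ h => extSet_injective K h)]
      have h1 : ∀ j ∈ P a, Real.exp (-(w' (Sum.inl a) (extSet K j)))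
          = Real.exp (-(w a j + β)) := by
        intro j hj; rw [hw'1 a j hj]
      rw [Finset.sum_congr rfl h1, hw'2 a, neg_neg,
        Real.exp_log (by linarith [hSlt1 a])]
      ring
    · show ∑ J ∈ ({barSet K a} : Finset (Finset (BExt A B))), Real.exp (-(w' (Sum.inr a) J)) = 1
      rw [Finset.sum_singleton, hw'3 a]; simp
  · rintro (a | a) J hJ
    · rcases Finset.mem_union.mp hJ with h | h
      · obtain ⟨j, hj, rfl⟩ := Finset.mem_image.mp h
        exact extSet_card K hK j (hP2 a j hj)
      · rw [Finset.mem_singleton.mp h]; exact barSet_card K a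
    · rw [Finset.mem_singleton.mp hJ]; exact barSet_card K a
  · rintro (a | a) J hJ
    · rcases Finset.mem_union.mp hJ with h | h
      · obtain ⟨j, hj, rfl⟩ := Finset.mem_image.mp h
        rw [hw'1 a j hj]
        linarith [hw a j hj]
      · rw [Finset.mem_singleton.mp h, hw'2 a, neg_nonneg]
        exact Real.log_nonpos (by linarith [hSlt1 a]) (by linarith [hSpos a])
    · rw [Finset.mem_singleton.mp hJ, hw'3 a]
end

section
/- The 2-MDPAW instance admits a valid assignment f with w(f) ≤ t if and only if the constructed K-MDP instance admits a valid assignment f' with w'(f') ≤ t' = t + n_A·β. (Here a valid assignment of an instance is a function g with g(a) ∈ P_a, resp. P'_a, for all a in the ground set and g(a₁) ∩ g(a₂) = ∅ for a₁ ≠ a₂, and its weight is the sum of the weights of the chosen candidate sets.) -/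
lemma mem_extSet {A B : Type*} [DecidableEq A] [DecidableEq B] {K : ℕ} {j : Finset B}
    {x : BExt A B} : x ∈ extSet K j ↔
      (∃ b ∈ j, Sum.inl b = x) ∨ ∃ k, (3 ≤ k ∧ k ≤ K) ∧ Sum.inr (Sum.inl (j, k)) = x := by
  simp [extSet]

lemma mem_barSet {A B : Type*} [DecidableEq A] [DecidableEq B] {K : ℕ} {a : A}
    {x : BExt A B} : x ∈ barSet K a ↔
      ∃ k, (1 ≤ k ∧ k ≤ K) ∧ Sum.inr (Sum.inr (a, k)) = x := by
  simp [barSet]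

lemma barSet_nonempty {A B : Type*} [DecidableEq A] [DecidableEq B] {K : ℕ} (hK : 1 ≤ K)
    (a : A) : (barSet (B := B) K a).Nonempty := by
  exact ⟨Sum.inr (Sum.inr (a, 1)), mem_barSet.2 ⟨1, ⟨le_refl 1, hK⟩, rfl⟩⟩

/-- the 2-MDPAW instance admits a valid assignment of weight at most `t`
iff the constructed K-MDP instance admits a valid assignment of weight at most
`t' = t + n_A·β`. -/
theorem stmt_11 {A B : Type*} [Fintype A] [DecidableEq A] [DecidableEq B]
    (K : ℕ) (hK : 2 ≤ K)
    (P : A → Finset (Finset B))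
    (hPne : ∀ a, (P a).Nonempty)
    (hP2 : ∀ a, ∀ j ∈ P a, j.card = 2)
    (w : A → Finset B → ℝ) (hw : ∀ a, ∀ j ∈ P a, 0 ≤ w a j)
    (t : ℝ) (β : ℝ) (hβ0 : 0 ≤ β)
    (hβ : ∀ a, Real.log (∑ j ∈ P a, Real.exp (-(w a j))) < β)
    (w' : A ⊕ A → Finset (BExt A B) → ℝ)
    (hw'1 : ∀ a : A, ∀ j ∈ P a, w' (Sum.inl a) (extSet K j) = w a j + β)
    (hw'2 : ∀ a : A, w' (Sum.inl a) (barSet K a) =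
      -Real.log (1 - ∑ j ∈ P a, Real.exp (-(w a j + β))))
    (hw'3 : ∀ a : A, w' (Sum.inr a) (barSet K a) = 0) :
    (∃ f : A → Finset B, (∀ a, f a ∈ P a) ∧
        (∀ a₁ a₂ : A, a₁ ≠ a₂ → f a₁ ∩ f a₂ = ∅) ∧
        ∑ a, w a (f a) ≤ t) ↔
    (∃ f' : A ⊕ A → Finset (BExt A B), (∀ x, f' x ∈ Pext K P x) ∧
        (∀ x y : A ⊕ A, x ≠ y → f' x ∩ f' y = ∅) ∧
        ∑ x, w' x (f' x) ≤ t + (Fintype.card A : ℝ) * β) := by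
  constructor
  · rintro ⟨f, hfP, hfd, hft⟩
    refine ⟨Sum.elim (fun a => extSet K (f a)) (fun a => barSet K a), ?_, ?_, ?_⟩
    · rintro (a | a)
      · simp only [Sum.elim_inl, Pext, Finset.mem_union, Finset.mem_image]
        exact Or.inl ⟨f a, hfP a, rfl⟩
      · simp [Pext]
    · have hne : ∀ a, (f a).Nonempty := by
        intro a
        rw [← Finset.card_pos, hP2 a (f a) (hfP a)]; norm_num
      rintro (a | a) (a' | a') hxy <;>
        simp only [Sum.elim_inl, Sum.elim_inr] <;>
        rw [Finset.eq_empty_iff_forall_notMem] <;>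
        intro x hx <;>
        rw [Finset.mem_inter] at hx
      · have haa : a ≠ a' := fun h => hxy (by rw [h])
        rcases mem_extSet.1 hx.1 with ⟨b, hb, rfl⟩ | ⟨k, hk, rfl⟩
        · rcases mem_extSet.1 hx.2 with ⟨b', hb', heq⟩ | ⟨k', hk', heq⟩
          · have hbb : b' = b := by simpa using heq
            have h := hfd a a' haa
            rw [Finset.eq_empty_iff_forall_notMem] at h
            exact h b (Finset.mem_inter.2 ⟨hb, hbb ▸ hb'⟩)
          · simp at heq
        · rcases mem_extSet.1 hx.2 with ⟨b', hb', heq⟩ | ⟨k', hk', heq⟩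
          · simp at heq
          · simp only [Sum.inr.injEq, Sum.inl.injEq, Prod.mk.injEq] at heq
            have h := hfd a a' haa
            rw [heq.1, Finset.inter_self] at h
            exact Finset.nonempty_iff_ne_empty.1 (hne a) h
      · rcases mem_barSet.1 hx.2 with ⟨k', hk', heq⟩
        rcases mem_extSet.1 hx.1 with ⟨b, hb, rfl⟩ | ⟨k, hk, rfl⟩ <;> simp at heq
      · rcases mem_barSet.1 hx.1 with ⟨k, hk, rfl⟩
        rcases mem_extSet.1 hx.2 with ⟨b, hb, heq⟩ | ⟨k', hk', heq⟩ <;> simp at heq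
      · have haa : a ≠ a' := fun h => hxy (by rw [h])
        rcases mem_barSet.1 hx.1 with ⟨k, hk, rfl⟩
        rcases mem_barSet.1 hx.2 with ⟨k', hk', heq⟩
        simp only [Sum.inr.injEq, Prod.mk.injEq] at heq
        exact haa heq.1.symm
    · rw [Fintype.sum_sum_type]
      simp only [Sum.elim_inl, Sum.elim_inr]
      have h1 : ∀ a : A, w' (Sum.inl a) (extSet K (f a)) = w a (f a) + β :=
        fun a => hw'1 a (f a) (hfP a)
      rw [Finset.sum_congr rfl (fun a _ => h1 a),
        Finset.sum_congr rfl (fun a _ => hw'3 a), Finset.sum_add_distrib,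
        Finset.sum_const, Finset.sum_const_zero, add_zero, nsmul_eq_mul,
        Finset.card_univ]
      linarith
  · rintro ⟨f', hP', hd', ht'⟩
    have hbar : ∀ a, f' (Sum.inr a) = barSet K a := by
      intro a
      have := hP' (Sum.inr a)
      simpa [Pext] using this
    have hext : ∀ a, ∃ j, j ∈ P a ∧ f' (Sum.inl a) = extSet K j := by
      intro a
      have h := hP' (Sum.inl a)
      simp only [Pext, Finset.mem_union, Finset.mem_image, Finset.mem_singleton] at h
      rcases h with ⟨j, hj, hje⟩ | h
      · exact ⟨j, hj, hje.symm⟩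
      · exfalso
        have hd := hd' (Sum.inl a) (Sum.inr a) (by simp)
        rw [h, hbar a, Finset.inter_self] at hd
        exact Finset.nonempty_iff_ne_empty.1 (barSet_nonempty (by omega) a) hd
    choose g hgP hge using hext
    refine ⟨g, hgP, ?_, ?_⟩
    · intro a₁ a₂ ha
      rw [Finset.eq_empty_iff_forall_notMem]
      intro b hb
      rw [Finset.mem_inter] at hb
      have h1 : (Sum.inl b : BExt A B) ∈ f' (Sum.inl a₁) := by
        rw [hge a₁]; exact mem_extSet.2 (Or.inl ⟨b, hb.1, rfl⟩)
      have h2 : (Sum.inl b : BExt A B) ∈ f' (Sum.inl a₂) := by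
        rw [hge a₂]; exact mem_extSet.2 (Or.inl ⟨b, hb.2, rfl⟩)
      have := hd' (Sum.inl a₁) (Sum.inl a₂) (by simp [ha])
      rw [Finset.eq_empty_iff_forall_notMem] at this
      exact this _ (Finset.mem_inter.2 ⟨h1, h2⟩)
    · rw [Fintype.sum_sum_type] at ht'
      have h1 : ∀ a : A, w' (Sum.inl a) (f' (Sum.inl a)) = w a (g a) + β := by
        intro a; rw [hge a]; exact hw'1 a (g a) (hgP a)
      have h2 : ∀ a : A, w' (Sum.inr a) (f' (Sum.inr a)) = 0 := by
        intro a; rw [hbar a]; exact hw'3 a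
      rw [Finset.sum_congr rfl (fun a _ => h1 a),
        Finset.sum_congr rfl (fun a _ => h2 a), Finset.sum_add_distrib,
        Finset.sum_const, Finset.sum_const_zero, add_zero, nsmul_eq_mul,
        Finset.card_univ] at ht'
      linarith
end
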